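/- Let (T(t)) be a C₀-semigroup on a Banach space E with generator (A,dom(A)), 0 ∈ ρ(A), and extrapolation data (E₋₁,ι,T₋₁,A₋₁), and let (𝒰(t)) be the semigroup on 𝓛(E) left implemented by (T(t)), with extrapolated semigroup 𝒰₋₁(t)S := T₋₁(t)∘S on 𝓛(E,E₋₁). Fix α ∈ [0,1]. For B ∈ 𝓛(E,E₋₁) define 𝒦 : 𝓛(E) → 𝓛(E,E₋₁) by 𝒦(C) := B∘C. Then Ran(𝒦) ⊆ F_α(𝒰) if and only if Ran(B) ⊆ F_α(T). Here, for α ∈ (0,1]: Ran(B) ⊆ F_α(T) means that for every x ∈ E there is y ∈ E with Bx = ιy and sup_{s∈(0,1)} ‖T(s)y−y‖/s^α < ∞, and Ran(𝒦) ⊆ F_α(𝒰) is the analogous condition for 𝒰 on 𝓛(E); for α = 0: Ran(B) ⊆ F₀(T) means sup_{s∈(0,1)} ‖T₋₁(s)(Bx)−Bx‖_{E₋₁}/s < ∞ for every x ∈ E, and Ran(𝒦) ⊆ F₀(𝒰) means sup_{s∈(0,1)} ‖𝒰₋₁(s)(𝒦C)−𝒦C‖_{𝓛(E,E₋₁)}/s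 < ∞ for every C ∈ 𝓛(E). -/

import Mathlib

open Set Filter Topology MeasureTheory

variable {E E₁ : Type*} [NormedAddCommGroup E] [NormedSpace ℝ E]
  [NormedAddCommGroup E₁] [NormedSpace ℝ E₁]

/-- A `C₀`-semigroup on a Banach space `E`. -/
structure IsC0Semigroup (T : ℝ → E →L[ℝ] E) : Prop where
  map_zero : T 0 = 1
  map_add : ∀ s t : ℝ, 0 ≤ s → 0 ≤ t → T (s + t) = (T s).comp (T t)
  strongCont : ∀ x : E, ContinuousOn (fun t => T t x) (Ici (0:ℝ))

/-- The generator relation of a `C₀`-semigroup: `y = Ax`. -/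
def C0GenRel (T : ℝ → E →L[ℝ] E) (x y : E) : Prop :=
  Tendsto (fun t : ℝ => t⁻¹ • (T t x - x)) (nhdsWithin 0 (Ioi 0)) (nhds y)

/-- Extrapolation data `(E₋₁, ι, T₋₁, A₋₁)` for a `C₀`-semigroup `T` with `0 ∈ ρ(A)`:
`ι : E → E₋₁` is a continuous dense injection, `T₋₁` a `C₀`-semigroup on `E₋₁` extending `T`
via `ι`, whose generator `A₋₁` has domain `ι(E)`, extends `A`, and `Am = A₋₁ ∘ ι : E → E₋₁`
is an isomorphism. -/
structure ExtrapolationData (T : ℝ → E →L[ℝ] E) (T₁ : ℝ → E₁ →L[ℝ] E₁)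
    (ι : E →L[ℝ] E₁) (Am : E ≃L[ℝ] E₁) : Prop where
  c0T : IsC0Semigroup T
  c0T₁ : IsC0Semigroup T₁
  inj : Function.Injective ι
  dense : DenseRange ι
  intertwine : ∀ t : ℝ, 0 ≤ t → ∀ x : E, T₁ t (ι x) = ι (T t x)
  gen₁ : ∀ x : E, C0GenRel T₁ (ι x) (Am x)
  gen₁_dom : ∀ z y : E₁, C0GenRel T₁ z y → z ∈ Set.range ι
  gen_extends : ∀ x y : E, C0GenRel T x y → (Am x : E₁) = ι y
  zero_res : ∃ R : E →L[ℝ] E, (∀ y : E, C0GenRel T (R y) y) ∧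
    ∀ x y : E, C0GenRel T x y → x = R y

/-- The Desch–Schappacher admissibility class `𝒮^{DS}_{t₀}(T)` for a `C₀`-semigroup:
for every strongly continuous `𝓛(E)`-valued `F` the Volterra integrals take values in `ι(E)`,
give a strongly continuous `𝓛(E)`-valued function `V_B F`, and `‖V_B‖ ≤ q < 1`. -/
def MemSDS (T₁ : ℝ → E₁ →L[ℝ] E₁) (ι : E →L[ℝ] E₁) (B : E →L[ℝ] E₁) (t₀ : ℝ) : Prop :=
  ∃ q : ℝ, 0 ≤ q ∧ q < 1 ∧
    ∀ F : ℝ → E →L[ℝ] E, (∀ x : E, ContinuousOn (fun r => F r x) (Icc (0:ℝ) t₀)) →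
      ∃ G : ℝ → E →L[ℝ] E,
        (∀ t ∈ Icc (0:ℝ) t₀, ∀ x : E,
          ι (G t x) = ∫ r in (0:ℝ)..t, T₁ (t - r) (B (F r x))) ∧
        (∀ x : E, ContinuousOn (fun t => G t x) (Icc (0:ℝ) t₀)) ∧
        ∀ c : ℝ, (∀ s ∈ Icc (0:ℝ) t₀, ‖F s‖ ≤ c) → ∀ t ∈ Icc (0:ℝ) t₀, ‖G t‖ ≤ q * c

/-- The semigroup on `𝓛(E)` left implemented by `T`: `𝒰(t)C := T(t) ∘ C`. -/
noncomputable def implemented (T : ℝ → E →L[ℝ] E) (t : ℝ) :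
    (E →L[ℝ] E) →L[ℝ] (E →L[ℝ] E) :=
  ContinuousLinearMap.compL ℝ E E E (T t)

/-- The extrapolated implemented semigroup on `𝓛(E,E₋₁)`: `𝒰₋₁(t)S := T₋₁(t) ∘ S`. -/
noncomputable def implementedExt (T₁ : ℝ → E₁ →L[ℝ] E₁) (t : ℝ) :
    (E →L[ℝ] E₁) →L[ℝ] (E →L[ℝ] E₁) :=
  ContinuousLinearMap.compL ℝ E E₁ E₁ (T₁ t)

/-- Membership in the space `𝔛_{t₀}` of strongly `τ_sot`-continuous, norm-bounded,
bi-equicontinuous functions `F : [0,t₀] → 𝓛(𝓛(E))`. -/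
def MemXsot (t₀ : ℝ) (F : ℝ → (E →L[ℝ] E) →L[ℝ] (E →L[ℝ] E)) : Prop :=
  (∀ (C : E →L[ℝ] E) (x : E), ContinuousOn (fun t => (F t C) x) (Icc (0:ℝ) t₀)) ∧
  (∃ M : ℝ, ∀ t ∈ Icc (0:ℝ) t₀, ‖F t‖ ≤ M) ∧
  ∀ u : ℕ → E →L[ℝ] E, (∃ c : ℝ, ∀ n, ‖u n‖ ≤ c) →
    (∀ x : E, Tendsto (fun n => u n x) atTop (nhds (0:E))) →
    ∀ x : E, ∀ ε > (0:ℝ), ∃ N : ℕ, ∀ n ≥ N, ∀ t ∈ Icc (0:ℝ) t₀, ‖(F t (u n)) x‖ < ε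

/-- The Desch–Schappacher admissibility class `𝒮^{DS,τ_sot}_{t₀}(𝒰)` for the implemented
semigroup: `𝒦 : 𝓛(E) → 𝓛(E,E₋₁)` is `τ_sot`-to-`τ_sot` continuous, and the Volterra operator
`(V_𝒦 F)(t)C = ∫₀ᵗ 𝒰₋₁(t-r) 𝒦(F(r)C) dr` takes values in `𝓛(E)`, maps `𝔛_{t₀}` into itself
and has `‖V_𝒦‖ ≤ q < 1`. -/
def MemSDSsot (T₁ : ℝ → E₁ →L[ℝ] E₁) (ι : E →L[ℝ] E₁)
    (K : (E →L[ℝ] E) →L[ℝ] (E →L[ℝ] E₁)) (t₀ : ℝ) : Prop :=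
  (∀ x : E, ∃ (v : Finset E) (c : ℝ), 0 ≤ c ∧
      ∀ S : E →L[ℝ] E, ‖(K S) x‖ ≤ c * ∑ y ∈ v, ‖S y‖) ∧
  ∃ q : ℝ, 0 ≤ q ∧ q < 1 ∧
    ∀ F : ℝ → (E →L[ℝ] E) →L[ℝ] (E →L[ℝ] E), MemXsot t₀ F →
      ∃ G : ℝ → (E →L[ℝ] E) →L[ℝ] (E →L[ℝ] E), MemXsot t₀ G ∧
        (∀ t ∈ Icc (0:ℝ) t₀, ∀ (C : E →L[ℝ] E) (x : E),
          ι ((G t C) x) = ∫ r in (0:ℝ)..t, T₁ (t - r) ((K (F r C)) x)) ∧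
        ∀ c : ℝ, (∀ s ∈ Icc (0:ℝ) t₀, ‖F s‖ ≤ c) → ∀ t ∈ Icc (0:ℝ) t₀, ‖G t‖ ≤ q * c

/-- A `τ_sot`-bi-continuous semigroup on `𝓛(E)`. -/
structure IsBiContSotSemigroup (U : ℝ → (E →L[ℝ] E) →L[ℝ] (E →L[ℝ] E)) : Prop where
  map_zero : U 0 = 1
  map_add : ∀ s t : ℝ, 0 ≤ s → 0 ≤ t → U (s + t) = (U s).comp (U t)
  strongCont : ∀ (C : E →L[ℝ] E) (x : E), ContinuousOn (fun t => (U t C) x) (Ici (0:ℝ))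
  expBound : ∃ M : ℝ, 1 ≤ M ∧ ∃ ω : ℝ, ∀ t : ℝ, 0 ≤ t → ‖U t‖ ≤ M * Real.exp (ω * t)
  biequi : ∀ t₀ : ℝ, 0 < t₀ → ∀ u : ℕ → E →L[ℝ] E, (∃ c : ℝ, ∀ n, ‖u n‖ ≤ c) →
    (∀ x : E, Tendsto (fun n => u n x) atTop (nhds (0:E))) →
    ∀ x : E, ∀ ε > (0:ℝ), ∃ N : ℕ, ∀ n ≥ N, ∀ t ∈ Icc (0:ℝ) t₀, ‖(U t (u n)) x‖ < ε

/-- The generator relation of a `τ_sot`-bi-continuous semigroup on `𝓛(E)`. -/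
def SotGenRel (U : ℝ → (E →L[ℝ] E) →L[ℝ] (E →L[ℝ] E)) (C Y : E →L[ℝ] E) : Prop :=
  (∀ x : E, Tendsto (fun t : ℝ => t⁻¹ • ((U t C) x - C x))
      (nhdsWithin 0 (Ioi 0)) (nhds (Y x))) ∧
    ∃ M : ℝ, ∀ t ∈ Ioc (0:ℝ) 1, ‖U t C - C‖ ≤ M * t

/-- `V` is a `τ_sot`-bi-continuous semigroup on `𝓛(E)` generated by `(𝒢₋₁ + 𝒦)|_{𝓛(E)}`,
where `𝒢₋₁ C = A₋₁ ∘ ι ∘ C` and the domain is `{C : 𝒢₋₁C + 𝒦C ∈ 𝓛(E)}`. -/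
def GeneratedByPerturbedImpl (V : ℝ → (E →L[ℝ] E) →L[ℝ] (E →L[ℝ] E))
    (ι : E →L[ℝ] E₁) (Am : E ≃L[ℝ] E₁)
    (K : (E →L[ℝ] E) →L[ℝ] (E →L[ℝ] E₁)) : Prop :=
  IsBiContSotSemigroup V ∧ ∀ C Y : E →L[ℝ] E,
    SotGenRel V C Y ↔ ι.comp Y = ((Am : E →L[ℝ] E₁)).comp C + K C

lemma aux_norm_le_of_inv_smul {F : Type*} [NormedAddCommGroup F] [NormedSpace ℝ F]
    {c M : ℝ} (hc : 0 < c) {v : F} (h : ‖c⁻¹ • v‖ ≤ M) : ‖v‖ ≤ M * c := by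
  have h0 : v = c • c⁻¹ • v := by rw [smul_smul, mul_inv_cancel₀ hc.ne', one_smul]
  calc ‖v‖ = ‖c • c⁻¹ • v‖ := by rw [← h0]
    _ ≤ ‖c‖ * ‖c⁻¹ • v‖ := norm_smul_le _ _
    _ ≤ c * M := by
        rw [Real.norm_eq_abs, abs_of_pos hc]
        exact mul_le_mul_of_nonneg_left h hc.le
    _ = M * c := mul_comm _ _

set_option maxHeartbeats 1000000 in
/-- For `B ∈ 𝓛(E,E₋₁)` and the multiplication operator `𝒦(C) = B∘C`,
the range of `𝒦` lies in the Favard space `F_α(𝒰)` iff the range of `B` lies in `F_α(T)`;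
for `α ∈ (0,1]` via the Favard space of the semigroup itself, for `α = 0` via the
extrapolated Favard class. -/
theorem stmt_11 [CompleteSpace E] [CompleteSpace E₁]
    (T : ℝ → E →L[ℝ] E) (T₁ : ℝ → E₁ →L[ℝ] E₁) (ι : E →L[ℝ] E₁) (Am : E ≃L[ℝ] E₁)
    (hExt : ExtrapolationData T T₁ ι Am)
    (α : ℝ) (hα : α ∈ Icc (0:ℝ) 1) (B : E →L[ℝ] E₁) :
    (0 < α →
      ((∀ C : E →L[ℝ] E, ∃ Y : E →L[ℝ] E,
          (ContinuousLinearMap.compL ℝ E E E₁ B) C = ι.comp Y ∧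
          ∃ M : ℝ, ∀ s ∈ Ioo (0:ℝ) 1, ‖implemented T s Y - Y‖ ≤ M * s ^ α) ↔
        (∀ x : E, ∃ y : E, B x = ι y ∧
          ∃ M : ℝ, ∀ s ∈ Ioo (0:ℝ) 1, ‖T s y - y‖ ≤ M * s ^ α))) ∧
    (α = 0 →
      ((∀ C : E →L[ℝ] E, ∃ M : ℝ, ∀ s ∈ Ioo (0:ℝ) 1,
          ‖implementedExt T₁ s ((ContinuousLinearMap.compL ℝ E E E₁ B) C) -
              (ContinuousLinearMap.compL ℝ E E E₁ B) C‖ ≤ M * s) ↔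
        (∀ x : E, ∃ M : ℝ, ∀ s ∈ Ioo (0:ℝ) 1, ‖T₁ s (B x) - B x‖ ≤ M * s))) := by
  constructor
  · intro hα0
    constructor
    · intro h x
      obtain ⟨Y, hY, M, hM⟩ := h 1
      have hYx : B x = ι (Y x) := by
        have := congrArg (fun S : E →L[ℝ] E₁ => S x) hY
        simpa using this
      refine ⟨Y x, hYx, M * ‖x‖, fun s hs => ?_⟩
      have h1 : ‖(implemented T s Y - Y) x‖ ≤ M * s ^ α * ‖x‖ :=
        (implemented T s Y - Y).le_of_opNorm_le (hM s hs) x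
      have h2 : (implemented T s Y - Y) x = T s (Y x) - Y x := by
        simp [implemented]
      rw [h2] at h1
      calc ‖T s (Y x) - Y x‖ ≤ M * s ^ α * ‖x‖ := h1
        _ = M * ‖x‖ * s ^ α := by ring
    · intro h C
      choose y hy hbd using h
      have hadd : ∀ a b : E, y (a + b) = y a + y b := by
        intro a b
        apply hExt.inj
        simp only [_root_.map_add, ← hy]
      have hsmul : ∀ (c : ℝ) (a : E), y (c • a) = c • y a := by
        intro c a
        apply hExt.inj
        simp only [_root_.map_smul, ← hy]
      let f : E →ₗ[ℝ] E := ⟨⟨y, hadd⟩, hsmul⟩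
      have hyf : ∀ a : E, f a = y a := fun a => rfl
      have hcont : Continuous f := by
        apply f.continuous_of_seq_closed_graph
        intro u x z hu hz
        have h1 : Tendsto (fun n => ι (y (u n))) atTop (𝓝 (ι z)) :=
          (ι.continuous.tendsto z).comp hz
        have h2 : Tendsto (fun n => ι (y (u n))) atTop (𝓝 (B x)) := by
          simpa only [← hy, Function.comp_def] using (B.continuous.tendsto x).comp hu
        have h3 : ι z = B x := tendsto_nhds_unique h1 h2
        exact hExt.inj (by rw [h3, hy, hyf])
      let fc : E →L[ℝ] E := ⟨f, hcont⟩
      have hbs : ∃ M' : ℝ, ∀ s : Ioo (0:ℝ) 1,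
          ‖((s : ℝ) ^ α)⁻¹ • ((T (s:ℝ)).comp fc - fc)‖ ≤ M' := by
        apply banach_steinhaus
        intro x
        refine ⟨max (hbd x).choose 0, fun s => ?_⟩
        have hsα : (0:ℝ) < (s:ℝ) ^ α := Real.rpow_pos_of_pos s.2.1 α
        have hb := (hbd x).choose_spec s s.2
        have heq : ‖(((s:ℝ) ^ α)⁻¹ • ((T (s:ℝ)).comp fc - fc)) x‖
            = ((s:ℝ) ^ α)⁻¹ * ‖T (s:ℝ) (y x) - y x‖ := by
          simp [norm_smul, abs_of_pos hsα, fc, hyf]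
        rw [heq, inv_mul_le_iff₀ hsα]
        calc ‖T (s:ℝ) (y x) - y x‖ ≤ (hbd x).choose * (s:ℝ) ^ α := hb
          _ ≤ max (hbd x).choose 0 * (s:ℝ) ^ α :=
              mul_le_mul_of_nonneg_right (le_max_left _ _) hsα.le
          _ = (s:ℝ) ^ α * max (hbd x).choose 0 := mul_comm _ _
      obtain ⟨M', hM'⟩ := hbs
      refine ⟨fc.comp C, ?_, M' * ‖C‖, fun s hs => ?_⟩
      · ext x
        show B (C x) = ι (y (C x))
        exact hy (C x)
      · have hsα : (0:ℝ) < s ^ α := Real.rpow_pos_of_pos hs.1 α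
        have h1 : ‖(s ^ α)⁻¹ • ((T s).comp fc - fc)‖ ≤ M' := hM' ⟨s, hs⟩
        have h2 : ‖(T s).comp fc - fc‖ ≤ M' * s ^ α :=
          aux_norm_le_of_inv_smul hsα h1
        have h3 : implemented T s (fc.comp C) - fc.comp C
            = ((T s).comp fc - fc).comp C := by
          ext x; simp [implemented]
        rw [h3]
        calc ‖((T s).comp fc - fc).comp C‖ ≤ ‖(T s).comp fc - fc‖ * ‖C‖ :=
              ContinuousLinearMap.opNorm_comp_le _ _
          _ ≤ M' * s ^ α * ‖C‖ := mul_le_mul_of_nonneg_right h2 (norm_nonneg _)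
          _ = M' * ‖C‖ * s ^ α := by ring
  · intro hα0
    constructor
    · intro h x
      obtain ⟨M, hM⟩ := h 1
      refine ⟨M * ‖x‖, fun s hs => ?_⟩
      have h1 := (implementedExt T₁ s ((ContinuousLinearMap.compL ℝ E E E₁ B) 1) -
        (ContinuousLinearMap.compL ℝ E E E₁ B) 1).le_of_opNorm_le (hM s hs) x
      have h2 : (implementedExt T₁ s ((ContinuousLinearMap.compL ℝ E E E₁ B) 1) -
          (ContinuousLinearMap.compL ℝ E E E₁ B) 1) x = T₁ s (B x) - B x := by
        simp [implementedExt]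
      rw [h2] at h1
      calc ‖T₁ s (B x) - B x‖ ≤ M * s * ‖x‖ := h1
        _ = M * ‖x‖ * s := by ring
    · intro h C
      have hbs : ∃ M' : ℝ, ∀ s : Ioo (0:ℝ) 1,
          ‖((s : ℝ))⁻¹ • ((T₁ (s:ℝ)).comp B - B)‖ ≤ M' := by
        apply banach_steinhaus
        intro x
        refine ⟨max (h x).choose 0, fun s => ?_⟩
        have hb := (h x).choose_spec s s.2
        have heq : ‖(((s:ℝ))⁻¹ • ((T₁ (s:ℝ)).comp B - B)) x‖
            = ((s:ℝ))⁻¹ * ‖T₁ (s:ℝ) (B x) - B x‖ := by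
          simp [norm_smul, abs_of_pos s.2.1]
        rw [heq, inv_mul_le_iff₀ s.2.1]
        calc ‖T₁ (s:ℝ) (B x) - B x‖ ≤ (h x).choose * (s:ℝ) := hb
          _ ≤ max (h x).choose 0 * (s:ℝ) :=
              mul_le_mul_of_nonneg_right (le_max_left _ _) s.2.1.le
          _ = (s:ℝ) * max (h x).choose 0 := mul_comm _ _
      obtain ⟨M', hM'⟩ := hbs
      refine ⟨M' * ‖C‖, fun s hs => ?_⟩
      have h1 : ‖(s : ℝ)⁻¹ • ((T₁ s).comp B - B)‖ ≤ M' := hM' ⟨s, hs⟩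
      have h2 : ‖(T₁ s).comp B - B‖ ≤ M' * s :=
        aux_norm_le_of_inv_smul hs.1 h1
      have h3 : implementedExt T₁ s ((ContinuousLinearMap.compL ℝ E E E₁ B) C) -
          (ContinuousLinearMap.compL ℝ E E E₁ B) C = ((T₁ s).comp B - B).comp C := by
        ext x; simp [implementedExt]
      rw [h3]
      calc ‖((T₁ s).comp B - B).comp C‖ ≤ ‖(T₁ s).comp B - B‖ * ‖C‖ :=
            ContinuousLinearMap.opNorm_comp_le _ _
        _ ≤ M' * s * ‖C‖ := mul_le_mul_of_nonneg_right h2 (norm_nonneg _)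
        _ = M' * ‖C‖ * s := by ring
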